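/- For positive integers N and k, the Haar average over N×N unitary matrices U with eigenangles θ_1,…,θ_N of |Z_U(θ_N + β)|^{2k}, where Z_U(θ) = ∏_{n=1}^{N}(1 − e^{i(θ_n−θ)}), satisfies E_N{|Z_U(θ_N+β)|^{2k}} = (1/N) |2 sin(β/2)|^{2k} E_{N−1}{|Z_W(0)|² |Z_W(β)|^{2k}}, where the right expectation is over Haar-random (N−1)×(N−1) unitary matrices W. -/

import Mathlib

open Finset Nat MeasureTheory Real

/-- The Weyl density `∏_{i<j} |e^{iθ_i} − e^{iθ_j}|²` of the eigenangles of a Haar-random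
unitary matrix. -/
noncomputable def weylDensity (N : ℕ) (θ : Fin N → ℝ) : ℝ :=
  ∏ i : Fin N, ∏ j ∈ Finset.Ioi i,
    ‖Complex.exp (Complex.I * θ i) - Complex.exp (Complex.I * θ j)‖ ^ 2

/-- The characteristic polynomial `Z(θ; t) = ∏_{m=1}^{N} (1 − e^{i(θ_m − t)})` as a function of
the eigenangles. -/
noncomputable def Zchar (N : ℕ) (θ : Fin N → ℝ) (t : ℝ) : ℂ :=
  ∏ m : Fin N, (1 - Complex.exp (Complex.I * ((θ m : ℂ) - t)))

/-! ### Auxiliary elementary lemmas -/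

lemma HAF.abs_one_sub_expI (s : ℝ) :
    ‖1 - Complex.exp (Complex.I * s)‖ = |2 * Real.sin (s / 2)| := by
  have h : (1 : ℂ) - Complex.exp (Complex.I * s)
      = Complex.ofReal (1 - Real.cos s) + Complex.ofReal (-Real.sin s) * Complex.I := by
    rw [mul_comm, Complex.exp_mul_I, ← Complex.ofReal_cos, ← Complex.ofReal_sin]
    push_cast
    ring
  rw [h, Complex.norm_add_mul_I]
  have hc : Real.cos s = 1 - 2 * Real.sin (s / 2) ^ 2 := by
    have h1 := Real.cos_sq (s / 2)
    rw [show 2 * (s / 2) = s by ring] at h1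
    have h2 : Real.sin (s / 2) ^ 2 + Real.cos (s / 2) ^ 2 = 1 := Real.sin_sq_add_cos_sq _
    nlinarith
  have h3 : (1 - Real.cos s) ^ 2 + (-Real.sin s) ^ 2 = (2 * Real.sin (s / 2)) ^ 2 := by
    have h2 : Real.sin s ^ 2 + Real.cos s ^ 2 = 1 := Real.sin_sq_add_cos_sq _
    nlinarith
  rw [h3, Real.sqrt_sq_eq_abs]

lemma HAF.abs_exp_sub_exp (x t : ℝ) :
    ‖Complex.exp (Complex.I * x) - Complex.exp (Complex.I * t)‖
      = ‖1 - Complex.exp (Complex.I * ((x : ℂ) - t))‖ := by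
  have habs : ‖Complex.exp (Complex.I * t)‖ = 1 := by
    rw [mul_comm, Complex.norm_exp]; simp
  have h : Complex.exp (Complex.I * x) - Complex.exp (Complex.I * t)
      = Complex.exp (Complex.I * t) * (Complex.exp (Complex.I * ((x : ℂ) - t)) - 1) := by
    rw [mul_sub, mul_one, ← Complex.exp_add]
    congr 2
    ring
  rw [h, norm_mul, habs, one_mul, norm_sub_rev]

/-! ### Continuity lemmas -/

lemma HAF.continuous_weylDensity (N : ℕ) : Continuous (weylDensity N) := by
  unfold weylDensity
  refine continuous_finset_prod _ fun i _ => continuous_finset_prod _ fun j _ => ?_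
  exact (continuous_norm.comp (by fun_prop)).pow 2

lemma HAF.continuous_Zchar (N : ℕ) {α : Type*} [TopologicalSpace α]
    {f : α → Fin N → ℝ} {g : α → ℝ} (hf : Continuous f) (hg : Continuous g) :
    Continuous (fun a => Zchar N (f a) (g a)) := by
  unfold Zchar
  refine continuous_finset_prod _ fun m _ => ?_
  fun_prop

/-! ### The circle-valued exponential and the lifted integrand -/

/-- The additive circle of circumference `2π`. -/
abbrev HAF.Ang : Type := AddCircle (2 * Real.pi)

instance HAF.fact2pi : Fact (0 < 2 * Real.pi) := ⟨Real.two_pi_pos⟩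

/-- The exponential `e^{iθ}` as a function on the additive circle of circumference `2π`. -/
noncomputable def HAF.Efn (a : HAF.Ang) : ℂ := (AddCircle.toCircle a : ℂ)

lemma HAF.Efn_coe (x : ℝ) : HAF.Efn (x : HAF.Ang) = Complex.exp (Complex.I * x) := by
  rw [HAF.Efn, AddCircle.toCircle_apply_mk, Circle.coe_exp,
    show 2 * Real.pi / (2 * Real.pi) * x = x by
      field_simp]
  rw [mul_comm]

lemma HAF.Efn_add (a b : HAF.Ang) : HAF.Efn (a + b) = HAF.Efn a * HAF.Efn b := by
  rw [HAF.Efn, AddCircle.toCircle_add]; rfl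

lemma HAF.continuous_Efn : Continuous HAF.Efn :=
  continuous_subtype_val.comp AddCircle.continuous_toCircle

/-- The integrand of the `U(n)` average, lifted to the torus. -/
noncomputable def HAF.Gfun (n : ℕ) (u v : ℂ) (k : ℕ) (y : Fin n → HAF.Ang) : ℝ :=
  (∏ i : Fin n, ∏ j ∈ Finset.Ioi i, ‖HAF.Efn (y i) - HAF.Efn (y j)‖ ^ 2)
    * (∏ m : Fin n, ‖1 - HAF.Efn (y m) * u‖) ^ 2
    * (∏ m : Fin n, ‖1 - HAF.Efn (y m) * v‖) ^ (2 * k)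

lemma HAF.continuous_Gfun (n : ℕ) (u v : ℂ) (k : ℕ) : Continuous (HAF.Gfun n u v k) := by
  unfold HAF.Gfun
  have h1 : Continuous fun y : Fin n → HAF.Ang =>
      ∏ i : Fin n, ∏ j ∈ Finset.Ioi i, ‖HAF.Efn (y i) - HAF.Efn (y j)‖ ^ 2 := by
    refine continuous_finset_prod _ fun i _ => continuous_finset_prod _ fun j _ => ?_
    exact ((continuous_norm.comp ((HAF.continuous_Efn.comp (continuous_apply i)).sub
      (HAF.continuous_Efn.comp (continuous_apply j)))).pow 2)
  have h2 : ∀ w : ℂ, Continuous fun y : Fin n → HAF.Ang =>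
      ∏ m : Fin n, ‖1 - HAF.Efn (y m) * w‖ := fun w => by
    refine continuous_finset_prod _ fun m _ => ?_
    exact continuous_norm.comp (continuous_const.sub
      ((HAF.continuous_Efn.comp (continuous_apply m)).mul continuous_const))
  exact (h1.mul ((h2 u).pow 2)).mul ((h2 v).pow (2 * k))

lemma HAF.abs_Zchar (N : ℕ) (x : Fin N → ℝ) (t : ℝ) :
    ‖Zchar N x t‖
      = ∏ m : Fin N,
          ‖1 - HAF.Efn ((x m : ℝ)) * Complex.exp (-(Complex.I * t))‖ := by
  rw [Zchar, norm_prod]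
  refine Finset.prod_congr rfl fun m _ => ?_
  rw [HAF.Efn_coe, ← Complex.exp_add]
  congr 2
  ring

lemma HAF.Gfun_comp_mk (n k : ℕ) (t β : ℝ) (x : Fin n → ℝ) :
    HAF.Gfun n (Complex.exp (-(Complex.I * t))) (Complex.exp (-(Complex.I * (t + β)))) k
        (fun i => ((x i : ℝ) : HAF.Ang))
      = weylDensity n x * ‖Zchar n x t‖ ^ 2
          * ‖Zchar n x (t + β)‖ ^ (2 * k) := by
  rw [HAF.Gfun, ← HAF.abs_Zchar n x t,
    show -(Complex.I * ((t : ℂ) + (β : ℂ))) = -(Complex.I * ((t + β : ℝ) : ℂ)) by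
      push_cast; ring,
    ← HAF.abs_Zchar n x (t + β), weylDensity]
  congr 1
  congr 1
  refine Finset.prod_congr rfl fun i _ => Finset.prod_congr rfl fun j _ => ?_
  rw [HAF.Efn_coe, HAF.Efn_coe]

lemma HAF.Gfun_translate (n k : ℕ) (t β : ℝ) (y : Fin n → HAF.Ang) :
    HAF.Gfun n (Complex.exp (-(Complex.I * t))) (Complex.exp (-(Complex.I * (t + β)))) k
        ((fun _ => ((t : ℝ) : HAF.Ang)) + y)
      = HAF.Gfun n 1 (Complex.exp (-(Complex.I * β))) k y := by
  have habs : ‖Complex.exp (Complex.I * t)‖ = 1 := by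
    rw [mul_comm, Complex.norm_exp]; simp
  unfold HAF.Gfun
  congr 1
  · congr 1
    · refine Finset.prod_congr rfl fun i _ => Finset.prod_congr rfl fun j _ => ?_
      simp only [Pi.add_apply, HAF.Efn_add, HAF.Efn_coe]
      rw [← mul_sub, norm_mul, habs, one_mul]
    · congr 1
      refine Finset.prod_congr rfl fun m _ => ?_
      simp only [Pi.add_apply, HAF.Efn_add, HAF.Efn_coe]
      rw [mul_assoc, mul_comm (HAF.Efn (y m)), ← mul_assoc, ← Complex.exp_add]
      simp
  · congr 1
    refine Finset.prod_congr rfl fun m _ => ?_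
    simp only [Pi.add_apply, HAF.Efn_add, HAF.Efn_coe]
    rw [mul_assoc, mul_comm (HAF.Efn (y m)), ← mul_assoc, ← Complex.exp_add]
    rw [show Complex.I * t + -(Complex.I * (t + β)) = -(Complex.I * β) by ring]
    rw [mul_comm]

/-! ### Measure-theoretic lemmas -/

/-- The restriction of Lebesgue measure to `(-π, π]`. -/
noncomputable abbrev HAF.muI : Measure ℝ := volume.restrict (Set.Ioc (-Real.pi) Real.pi)

instance : IsFiniteMeasure HAF.muI := by
  constructor
  rw [Measure.restrict_apply_univ, Real.volume_Ioc]
  exact ENNReal.ofReal_lt_top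

lemma HAF.pi_restrict (n : ℕ) :
    (volume : Measure (Fin n → ℝ)).restrict
        (Set.univ.pi fun _ : Fin n => Set.Icc (-Real.pi) Real.pi)
      = Measure.pi fun _ : Fin n => HAF.muI := by
  refine (Measure.pi_eq fun s hs => ?_).symm
  rw [Measure.restrict_apply (MeasurableSet.univ_pi fun i => (hs i))]
  rw [← Set.pi_inter_distrib, volume_pi, Measure.pi_pi]
  refine Finset.prod_congr rfl fun i _ => ?_
  have h : volume (s i ∩ Set.Icc (-Real.pi) Real.pi)
      = (volume.restrict (Set.Icc (-Real.pi) Real.pi)) (s i) :=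
    (Measure.restrict_apply (hs i)).symm
  rw [h, ← MeasureTheory.restrict_Ioc_eq_restrict_Icc]

lemma HAF.measurePreserving_angle_mk :
    MeasurePreserving (fun x : ℝ => (x : HAF.Ang)) HAF.muI volume := by
  have h := AddCircle.measurePreserving_mk (2 * Real.pi) (-Real.pi)
  have he : -Real.pi + 2 * Real.pi = Real.pi := by ring
  rwa [he] at h

lemma HAF.map_anglePi (n : ℕ) :
    Measure.map (fun (x : Fin n → ℝ) (i : Fin n) => ((x i : ℝ) : HAF.Ang))
        (Measure.pi fun _ : Fin n => HAF.muI)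
      = Measure.pi fun _ : Fin n => (volume : Measure HAF.Ang) := by
  have hmeas : Measurable fun (x : Fin n → ℝ) (i : Fin n) => ((x i : ℝ) : HAF.Ang) :=
    measurable_pi_lambda _ fun i =>
      HAF.measurePreserving_angle_mk.measurable.comp (measurable_pi_apply i)
  refine (Measure.pi_eq fun s hs => ?_).symm
  rw [Measure.map_apply hmeas (MeasurableSet.univ_pi fun i => hs i)]
  have h : (fun (x : Fin n → ℝ) (i : Fin n) => ((x i : ℝ) : HAF.Ang)) ⁻¹'
      (Set.univ.pi s) = Set.univ.pi fun i => (fun x : ℝ => (x : HAF.Ang)) ⁻¹' (s i) := by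
    ext x; simp [Set.mem_pi]
  rw [h, Measure.pi_pi]
  exact Finset.prod_congr rfl fun i _ =>
    HAF.measurePreserving_angle_mk.measure_preimage (hs i).nullMeasurableSet

/-- Translation invariance: the inner `U(n)` average is independent of the reference angle `t`. -/
lemma HAF.translate_integral (n k : ℕ) (β t : ℝ) :
    ∫ x, weylDensity n x * ‖Zchar n x t‖ ^ 2
        * ‖Zchar n x (t + β)‖ ^ (2 * k) ∂(Measure.pi fun _ : Fin n => HAF.muI)
      = ∫ x, weylDensity n x * ‖Zchar n x 0‖ ^ 2
          * ‖Zchar n x β‖ ^ (2 * k) ∂(Measure.pi fun _ : Fin n => HAF.muI) := by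
  have hΦ : Measurable fun (x : Fin n → ℝ) (i : Fin n) => ((x i : ℝ) : HAF.Ang) :=
    measurable_pi_lambda _ fun i =>
      HAF.measurePreserving_angle_mk.measurable.comp (measurable_pi_apply i)
  have key : ∀ u v : ℂ,
      ∫ x, HAF.Gfun n u v k (fun i => ((x i : ℝ) : HAF.Ang))
          ∂(Measure.pi fun _ : Fin n => HAF.muI)
        = ∫ y, HAF.Gfun n u v k y ∂(Measure.pi fun _ : Fin n => (volume : Measure HAF.Ang)) := by
    intro u v
    rw [← HAF.map_anglePi n,
      integral_map hΦ.aemeasurable (HAF.continuous_Gfun n u v k).aestronglyMeasurable]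
  calc
    ∫ x, weylDensity n x * ‖Zchar n x t‖ ^ 2
        * ‖Zchar n x (t + β)‖ ^ (2 * k) ∂(Measure.pi fun _ : Fin n => HAF.muI)
      = ∫ x, HAF.Gfun n (Complex.exp (-(Complex.I * t)))
          (Complex.exp (-(Complex.I * (t + β)))) k (fun i => ((x i : ℝ) : HAF.Ang))
          ∂(Measure.pi fun _ : Fin n => HAF.muI) :=
        integral_congr_ae (Filter.Eventually.of_forall fun x => (HAF.Gfun_comp_mk n k t β x).symm)
    _ = ∫ y, HAF.Gfun n (Complex.exp (-(Complex.I * t)))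
          (Complex.exp (-(Complex.I * (t + β)))) k y
          ∂(Measure.pi fun _ : Fin n => (volume : Measure HAF.Ang)) := key _ _
    _ = ∫ y, HAF.Gfun n (Complex.exp (-(Complex.I * t)))
          (Complex.exp (-(Complex.I * (t + β)))) k ((fun _ => ((t : ℝ) : HAF.Ang)) + y)
          ∂(Measure.pi fun _ : Fin n => (volume : Measure HAF.Ang)) :=
        (integral_add_left_eq_self _ _).symm
    _ = ∫ y, HAF.Gfun n 1 (Complex.exp (-(Complex.I * β))) k y
          ∂(Measure.pi fun _ : Fin n => (volume : Measure HAF.Ang)) :=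
        integral_congr_ae (Filter.Eventually.of_forall fun y => HAF.Gfun_translate n k t β y)
    _ = ∫ x, HAF.Gfun n 1 (Complex.exp (-(Complex.I * β))) k
          (fun i => ((x i : ℝ) : HAF.Ang)) ∂(Measure.pi fun _ : Fin n => HAF.muI) := (key _ _).symm
    _ = ∫ x, weylDensity n x * ‖Zchar n x 0‖ ^ 2
          * ‖Zchar n x β‖ ^ (2 * k) ∂(Measure.pi fun _ : Fin n => HAF.muI) := by
        refine integral_congr_ae (Filter.Eventually.of_forall fun x => ?_)
        have h := HAF.Gfun_comp_mk n k 0 β x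
        simpa using h

/-! ### Splitting off the last coordinate -/

lemma HAF.Ioi_castSucc (n : ℕ) (i : Fin n) :
    Finset.Ioi (Fin.castSucc i) = insert (Fin.last n) ((Finset.Ioi i).map Fin.castSuccEmb) := by
  ext j
  simp only [Finset.mem_Ioi, Finset.mem_insert, Finset.mem_map]
  refine Fin.lastCases ?_ (fun j' => ?_) j
  · simp [Fin.castSucc_lt_last]
  · constructor
    · intro h
      exact Or.inr ⟨j', by simpa [Fin.castSucc_lt_castSucc_iff] using h, rfl⟩
    · rintro (h | ⟨a, ha, hEq⟩)
      · exact absurd h (Fin.castSucc_lt_last j').ne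
      · have : a = j' := Fin.castSucc_injective n (by exact hEq)
        subst this
        simpa [Fin.castSucc_lt_castSucc_iff] using ha

lemma HAF.weylDensity_succ (n : ℕ) (θ : Fin (n + 1) → ℝ) :
    weylDensity (n + 1) θ
      = weylDensity n (θ ∘ Fin.castSucc) *
        ∏ i : Fin n, ‖Complex.exp (Complex.I * θ (Fin.castSucc i))
          - Complex.exp (Complex.I * θ (Fin.last n))‖ ^ 2 := by
  unfold weylDensity
  rw [Fin.prod_univ_castSucc]
  have hlast : (Finset.Ioi (Fin.last n)) = (∅ : Finset (Fin (n + 1))) := by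
    ext j; simp [not_lt.mpr (Fin.le_last j)]
  rw [hlast, Finset.prod_empty, mul_one, ← Finset.prod_mul_distrib]
  refine Finset.prod_congr rfl fun i _ => ?_
  rw [HAF.Ioi_castSucc, Finset.prod_insert, Finset.prod_map, mul_comm]
  · rfl
  · simp [Fin.castSuccEmb, (Fin.castSucc_lt_last _).ne']
    exact fun _ => Fin.le_last _

lemma HAF.Zchar_succ (n : ℕ) (θ : Fin (n + 1) → ℝ) (s : ℝ) :
    Zchar (n + 1) θ s
      = Zchar n (θ ∘ Fin.castSucc) s
          * (1 - Complex.exp (Complex.I * ((θ (Fin.last n) : ℂ) - s))) := by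
  unfold Zchar
  rw [Fin.prod_univ_castSucc]
  rfl

lemma HAF.pointwise_split (n k : ℕ) (β : ℝ) (θ : Fin (n + 1) → ℝ) :
    weylDensity (n + 1) θ
        * ‖Zchar (n + 1) θ (θ (Fin.last n) + β)‖ ^ (2 * k)
      = |2 * Real.sin (β / 2)| ^ (2 * k) *
        (weylDensity n (θ ∘ Fin.castSucc)
          * ‖Zchar n (θ ∘ Fin.castSucc) (θ (Fin.last n))‖ ^ 2
          * ‖Zchar n (θ ∘ Fin.castSucc) (θ (Fin.last n) + β)‖ ^ (2 * k)) := by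
  have h1 : ∏ i : Fin n, ‖Complex.exp (Complex.I * θ (Fin.castSucc i))
      - Complex.exp (Complex.I * θ (Fin.last n))‖ ^ 2
      = ‖Zchar n (θ ∘ Fin.castSucc) (θ (Fin.last n))‖ ^ 2 := by
    rw [Zchar, norm_prod, ← Finset.prod_pow]
    refine Finset.prod_congr rfl fun i _ => ?_
    rw [HAF.abs_exp_sub_exp]
    rfl
  have h2 : ‖1 - Complex.exp (Complex.I
        * (((θ (Fin.last n) : ℝ) : ℂ) - ((θ (Fin.last n) + β : ℝ) : ℂ)))‖
      = |2 * Real.sin (β / 2)| := by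
    rw [show ((θ (Fin.last n) : ℝ) : ℂ) - ((θ (Fin.last n) + β : ℝ) : ℂ) = ((-β : ℝ) : ℂ) by
        push_cast; ring,
      HAF.abs_one_sub_expI, show (-β) / 2 = -(β / 2) by ring, Real.sin_neg, mul_neg, abs_neg]
  rw [HAF.weylDensity_succ, HAF.Zchar_succ, h1, norm_mul, h2, mul_pow]
  ring

lemma HAF.esymm_last (n : ℕ) (t : ℝ) (x : Fin n → ℝ) :
    ((MeasurableEquiv.piFinSuccAbove (fun _ : Fin (n + 1) => ℝ) (Fin.last n)).symm (t, x))
      (Fin.last n) = t := by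
  simp [MeasurableEquiv.piFinSuccAbove]

lemma HAF.esymm_cast (n : ℕ) (t : ℝ) (x : Fin n → ℝ) :
    ((MeasurableEquiv.piFinSuccAbove (fun _ : Fin (n + 1) => ℝ) (Fin.last n)).symm (t, x))
      ∘ Fin.castSucc = x := by
  funext j
  simp [MeasurableEquiv.piFinSuccAbove, Fin.succAbove_last, Function.comp]

set_option maxHeartbeats 1000000 in
lemma HAF.fubini_last (n : ℕ) (F : (Fin (n + 1) → ℝ) → ℝ)
    (hFi : Integrable F (Measure.pi fun _ : Fin (n + 1) => HAF.muI)) :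
    ∫ θ, F θ ∂(Measure.pi fun _ : Fin (n + 1) => HAF.muI)
      = ∫ t, ∫ x, F ((MeasurableEquiv.piFinSuccAbove (fun _ : Fin (n + 1) => ℝ)
          (Fin.last n)).symm (t, x)) ∂(Measure.pi fun _ : Fin n => HAF.muI) ∂HAF.muI := by
  set e := MeasurableEquiv.piFinSuccAbove (fun _ : Fin (n + 1) => ℝ) (Fin.last n) with he
  have hmp := measurePreserving_piFinSuccAbove (fun _ : Fin (n + 1) => HAF.muI) (Fin.last n)
  have hmap : (HAF.muI.prod (Measure.pi fun _ : Fin n => HAF.muI))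
      = Measure.map e (Measure.pi fun _ : Fin (n + 1) => HAF.muI) := hmp.map_eq.symm
  have hInt2 : Integrable (fun z : ℝ × (Fin n → ℝ) => F (e.symm z))
      (HAF.muI.prod (Measure.pi fun _ : Fin n => HAF.muI)) := by
    have hcomp : ((fun z : ℝ × (Fin n → ℝ) => F (e.symm z)) ∘ ⇑e) = F := by
      funext θ; simp
    rw [hmap, integrable_map_equiv, hcomp]
    exact hFi
  have hstep1 : (∫ z : ℝ × (Fin n → ℝ), F (e.symm z)
        ∂(HAF.muI.prod (Measure.pi fun _ : Fin n => HAF.muI)))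
      = ∫ θ, F θ ∂(Measure.pi fun _ : Fin (n + 1) => HAF.muI) := by
    rw [hmap, integral_map_equiv]
    simp only [MeasurableEquiv.symm_apply_apply]
  rw [← hstep1, integral_prod _ hInt2]

/-! ### The main theorem -/

set_option maxHeartbeats 1000000 in
theorem haar_average_factorization (n k : ℕ) (hk : 1 ≤ k) (β : ℝ) :
    (1 / ((n + 1)! * (2 * Real.pi) ^ (n + 1))) *
      ∫ θ in Set.univ.pi fun _ : Fin (n + 1) => Set.Icc (-Real.pi) Real.pi,
        weylDensity (n + 1) θ *
          ‖Zchar (n + 1) θ (θ (Fin.last n) + β)‖ ^ (2 * k)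
    = (1 / (n + 1 : ℝ)) * |2 * Real.sin (β / 2)| ^ (2 * k) *
      ((1 / (n ! * (2 * Real.pi) ^ n)) *
        ∫ x in Set.univ.pi fun _ : Fin n => Set.Icc (-Real.pi) Real.pi,
          weylDensity n x * ‖Zchar n x 0‖ ^ 2 *
            ‖Zchar n x β‖ ^ (2 * k)) := by
  classical
  set c : ℝ := |2 * Real.sin (β / 2)| ^ (2 * k) with hc
  set F : (Fin (n + 1) → ℝ) → ℝ := fun θ =>
    weylDensity (n + 1) θ * ‖Zchar (n + 1) θ (θ (Fin.last n) + β)‖ ^ (2 * k)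
    with hF
  set J : ℝ := ∫ x, weylDensity n x * ‖Zchar n x 0‖ ^ 2
      * ‖Zchar n x β‖ ^ (2 * k) ∂(Measure.pi fun _ : Fin n => HAF.muI) with hJ
  have hFc : Continuous F := by
    refine (HAF.continuous_weylDensity (n + 1)).mul ?_
    refine (Continuous.pow ?_ (2 * k))
    exact continuous_norm.comp
      (HAF.continuous_Zchar (n + 1) continuous_id ((continuous_apply (Fin.last n)).add
        continuous_const))
  have hFi : Integrable F (Measure.pi fun _ : Fin (n + 1) => HAF.muI) := by
    rw [← HAF.pi_restrict]
    exact hFc.continuousOn.integrableOn_compact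
      (isCompact_univ_pi fun _ => isCompact_Icc)
  have hinner : ∀ t : ℝ,
      (∫ x, F ((MeasurableEquiv.piFinSuccAbove (fun _ : Fin (n + 1) => ℝ)
          (Fin.last n)).symm (t, x)) ∂(Measure.pi fun _ : Fin n => HAF.muI)) = c * J := by
    intro t
    have hpt : ∀ x : Fin n → ℝ,
        F ((MeasurableEquiv.piFinSuccAbove (fun _ : Fin (n + 1) => ℝ)
          (Fin.last n)).symm (t, x))
        = c * (weylDensity n x * ‖Zchar n x t‖ ^ 2
            * ‖Zchar n x (t + β)‖ ^ (2 * k)) := by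
      intro x
      have h := HAF.pointwise_split n k β
        ((MeasurableEquiv.piFinSuccAbove (fun _ : Fin (n + 1) => ℝ) (Fin.last n)).symm (t, x))
      rw [HAF.esymm_last, HAF.esymm_cast] at h
      simpa only [hF, hc, HAF.esymm_last] using h
    calc
      (∫ x, F ((MeasurableEquiv.piFinSuccAbove (fun _ : Fin (n + 1) => ℝ)
          (Fin.last n)).symm (t, x)) ∂(Measure.pi fun _ : Fin n => HAF.muI))
        = ∫ x, c * (weylDensity n x * ‖Zchar n x t‖ ^ 2
            * ‖Zchar n x (t + β)‖ ^ (2 * k))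
            ∂(Measure.pi fun _ : Fin n => HAF.muI) :=
          integral_congr_ae (Filter.Eventually.of_forall hpt)
      _ = c * ∫ x, weylDensity n x * ‖Zchar n x t‖ ^ 2
            * ‖Zchar n x (t + β)‖ ^ (2 * k)
            ∂(Measure.pi fun _ : Fin n => HAF.muI) := integral_const_mul _ _
      _ = c * J := by rw [HAF.translate_integral n k β t, hJ]
  have houter : ∫ θ in Set.univ.pi fun _ : Fin (n + 1) => Set.Icc (-Real.pi) Real.pi, F θ
      = (2 * Real.pi) * (c * J) := by
    rw [HAF.pi_restrict, HAF.fubini_last n F hFi]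
    have h := integral_congr_ae (μ := HAF.muI)
      (Filter.Eventually.of_forall hinner)
    rw [h, integral_const, measureReal_def, Measure.restrict_apply_univ, Real.volume_Ioc,
      ENNReal.toReal_ofReal (by linarith [Real.pi_pos] : (0:ℝ) ≤ Real.pi - -Real.pi), smul_eq_mul]
    ring
  have hRHS : ∫ x in Set.univ.pi fun _ : Fin n => Set.Icc (-Real.pi) Real.pi,
      weylDensity n x * ‖Zchar n x 0‖ ^ 2 *
        ‖Zchar n x β‖ ^ (2 * k) = J := by
    rw [HAF.pi_restrict, hJ]
  rw [houter, hRHS]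
  have hπ : Real.pi ≠ 0 := Real.pi_ne_zero
  have hfac : ((n ! : ℕ) : ℝ) ≠ 0 := Nat.cast_ne_zero.mpr (Nat.factorial_ne_zero n)
  have hfacs : (((n + 1)! : ℕ) : ℝ) = ((n : ℝ) + 1) * (n ! : ℝ) := by
    rw [Nat.factorial_succ]
    push_cast
    ring
  rw [hfacs]
  have hn1 : ((n : ℝ) + 1) ≠ 0 := by positivity
  field_simp
  ring
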